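/- Suppose X is at most countable and [x] = c·x + O(x^α) for some constant c > 0 and some α ∈ [0, 1). Define S(x, y) = Σ_{M, K ∈ I_X, N(M) ≤ x, N(K) ≤ y} C_K(M). Then S(x, y) = c·x + O(x^α · y^{2−α}) uniformly for x, y ≥ 1. -/

import Mathlib

open Finset Filter Topology Asymptotics
open scoped Classical

/-- The Möbius function on `I_X = X →₀ ℕ`: `μ A = (-1)^(∑ₓ A x)` if `A x ≤ 1`
for every `x`, and `0` otherwise. -/
noncomputable def mob {X : Type*} (A : X →₀ ℕ) : ℤ :=
  if ∀ x, A x ≤ 1 then (-1) ^ (A.sum fun _ n => n) else 0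

/-- The generalized Ramanujan sum `C_K(M) = ∑_{D ≤ M, D ≤ K} N(D)·μ(K − D)`. -/
noncomputable def ram {X : Type*} [DecidableEq X] (Nrm : (X →₀ ℕ) → ℤ)
    (K M : X →₀ ℕ) : ℤ :=
  ∑ D ∈ Finset.Iic (M ⊓ K), Nrm D * mob (K - D)

set_option linter.unusedSectionVars false

lemma mob_zero {X : Type*} : mob (0 : X →₀ ℕ) = 1 := by
  simp [mob]

lemma mob_abs_le {X : Type*} (A : X →₀ ℕ) : |mob A| ≤ 1 := by
  unfold mob; split
  · rw [abs_pow, abs_neg, abs_one, one_pow]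
  · simp

lemma mob_add_single {X : Type*} [DecidableEq X] (E : X →₀ ℕ) (a : X) (e : ℕ) (ha : E a = 0) :
    mob (E + Finsupp.single a e) = mob E * (if e ≤ 1 then (-1 : ℤ) ^ e else 0) := by
  have happ : ∀ x, (E + Finsupp.single a e) x = E x + (Finsupp.single a e) x := fun x => rfl
  have hcond : (∀ x, (E + Finsupp.single a e) x ≤ 1) ↔ (∀ x, E x ≤ 1) ∧ e ≤ 1 := by
    constructor
    · intro h
      refine ⟨fun x => le_trans (by simp [happ x]) (h x), ?_⟩
      have := h a
      rw [happ a, ha, Finsupp.single_eq_same] at this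
      simpa using this
    · rintro ⟨h1, h2⟩ x
      rcases eq_or_ne x a with rfl | hx
      · rw [happ x, ha, Finsupp.single_eq_same]; simpa using h2
      · rw [happ x, Finsupp.single_eq_of_ne' (Ne.symm hx)]; simpa using h1 x
  have hsum : ((E + Finsupp.single a e).sum fun _ n => n) = (E.sum fun _ n => n) + e := by
    rw [Finsupp.sum_add_index' (fun _ => rfl) (fun _ _ _ => rfl)]
    simp [Finsupp.sum_single_index]
  unfold mob
  by_cases h2 : e ≤ 1
  · by_cases h1 : ∀ x, E x ≤ 1
    · rw [if_pos (hcond.mpr ⟨h1, h2⟩), if_pos h1, if_pos h2, hsum, pow_add]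
    · rw [if_neg (fun h => h1 (hcond.mp h).1), if_neg h1, zero_mul]
  · rw [if_neg (fun h => h2 (hcond.mp h).2), if_neg h2, mul_zero]

lemma sum_m_eq_zero (n : ℕ) (hn : 1 ≤ n) :
    ∑ e ∈ Finset.Iic n, (if e ≤ 1 then (-1 : ℤ) ^ e else 0) = 0 := by
  rw [← Finset.sum_subset (Finset.Iic_subset_Iic.mpr hn)
    (fun e _ he => if_neg (by simpa using he))]
  decide

lemma sum_Iic_mob {X : Type*} [DecidableEq X] (K : X →₀ ℕ) :
    ∑ E ∈ Finset.Iic K, mob E = if K = 0 then 1 else 0 := by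
  rcases eq_or_ne K 0 with rfl | hK
  · have h : Finset.Iic (0 : X →₀ ℕ) = {0} := by
      ext E; simp [Finset.mem_Iic, le_zero_iff]
    simp [h, mob_zero]
  · rw [if_neg hK]
    obtain ⟨a, ha⟩ : ∃ a, K a ≠ 0 := by
      by_contra h; push_neg at h; exact hK (Finsupp.ext fun x => h x)
    have key : ∑ E ∈ Finset.Iic K, mob E
        = ∑ p ∈ (Finset.Iic (K.erase a)) ×ˢ (Finset.Iic (K a)),
            mob p.1 * (if p.2 ≤ 1 then (-1 : ℤ) ^ p.2 else 0) := by
      refine Finset.sum_nbij' (fun E => (E.erase a, E a))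
        (fun p => p.1 + Finsupp.single a p.2) ?_ ?_ ?_ ?_ ?_
      · intro E hE
        rw [Finset.mem_Iic] at hE
        rw [Finset.mem_product, Finset.mem_Iic, Finset.mem_Iic]
        constructor
        · intro x
          rcases eq_or_ne x a with rfl | hx
          · simp
          · rw [Finsupp.erase_ne hx, Finsupp.erase_ne hx]; exact hE x
        · exact hE a
      · intro p hp
        rw [Finset.mem_product, Finset.mem_Iic, Finset.mem_Iic] at hp
        rw [Finset.mem_Iic]
        intro x
        rcases eq_or_ne x a with rfl | hx
        · have h1 : p.1 x = 0 := by
            have := hp.1 x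
            simpa [Finsupp.erase_same] using this
          simp [h1, hp.2]
        · have := hp.1 x
          rw [Finsupp.erase_ne hx] at this
          simpa [Finsupp.single_eq_of_ne' (Ne.symm hx)] using this
      · intro E hE
        exact Finsupp.erase_add_single a E
      · intro p hp
        rw [Finset.mem_product, Finset.mem_Iic, Finset.mem_Iic] at hp
        have h1 : p.1 a = 0 := by
          have := hp.1 a
          simpa [Finsupp.erase_same] using this
        have he : Finsupp.erase a (p.1 + Finsupp.single a p.2) = p.1 := by
          rw [Finsupp.erase_add, Finsupp.erase_single, add_zero,
            Finsupp.erase_of_notMem_support (by simp [Finsupp.mem_support_iff, h1])]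
        have h2 : (p.1 + Finsupp.single a p.2) a = p.2 := by simp [h1]
        show (Finsupp.erase a (p.1 + Finsupp.single a p.2),
          (p.1 + Finsupp.single a p.2) a) = p
        rw [he, h2]
      · intro E hE
        rw [Finset.mem_Iic] at hE
        have h1 : (E.erase a) a = 0 := Finsupp.erase_same
        rw [← mob_add_single (E.erase a) a (E a) h1, Finsupp.erase_add_single]
    rw [key, Finset.sum_product]
    have : ∀ E' ∈ Finset.Iic (K.erase a),
        ∑ e ∈ Finset.Iic (K a), mob E' * (if e ≤ 1 then (-1 : ℤ) ^ e else 0) = 0 := by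
      intro E' _
      rw [← Finset.mul_sum, sum_m_eq_zero (K a) (Nat.one_le_iff_ne_zero.mpr ha), mul_zero]
    rw [Finset.sum_congr rfl this, Finset.sum_const, smul_zero]

lemma sum_Iic_mob_sub {X : Type*} [DecidableEq X] (K : X →₀ ℕ) :
    ∑ D ∈ Finset.Iic K, mob (K - D) = if K = 0 then 1 else 0 := by
  rw [← sum_Iic_mob K]
  refine Finset.sum_nbij' (fun D => K - D) (fun E => K - E) ?_ ?_ ?_ ?_ ?_
  · intro D _; rw [Finset.mem_Iic]; exact tsub_le_self
  · intro E _; rw [Finset.mem_Iic]; exact tsub_le_self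
  · intro D hD; rw [Finset.mem_Iic] at hD; exact tsub_tsub_cancel_of_le hD
  · intro E hE; rw [Finset.mem_Iic] at hE; exact tsub_tsub_cancel_of_le hE
  · intro D _; rfl

section
variable {X : Type*} [DecidableEq X] (Nrm : (X →₀ ℕ) → ℤ)

lemma card_shift (hge : ∀ A, 1 ≤ Nrm A) (hmul : ∀ A B, Nrm (A + B) = Nrm A * Nrm B)
    (hfin : ∀ x : ℝ, {A : X →₀ ℕ | (Nrm A : ℝ) ≤ x}.Finite) (t : ℝ) (D : X →₀ ℕ) :
    ((hfin t).toFinset.filter (fun M => D ≤ M)).card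
      = (hfin (t / (Nrm D : ℝ))).toFinset.card := by
  have hDpos : (0 : ℝ) < (Nrm D : ℝ) := by exact_mod_cast lt_of_lt_of_le zero_lt_one (hge D)
  refine Finset.card_nbij' (fun M => M - D) (fun M' => D + M') ?_ ?_ ?_ ?_
  · intro M hM
    rw [Finset.mem_coe, Finset.mem_filter, Set.Finite.mem_toFinset, Set.mem_setOf_eq] at hM
    obtain ⟨hM1, hM2⟩ := hM
    rw [Finset.mem_coe, Set.Finite.mem_toFinset, Set.mem_setOf_eq, le_div_iff₀ hDpos]
    have hrw : D + (M - D) = M := add_tsub_cancel_of_le hM2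
    have : Nrm (M - D) * Nrm D = Nrm M := by rw [mul_comm, ← hmul, hrw]
    calc ((Nrm (M - D)) : ℝ) * ((Nrm D) : ℝ) = ((Nrm M : ℤ) : ℝ) := by
          rw [← Int.cast_mul, this]
      _ ≤ t := hM1
  · intro M' hM'
    rw [Finset.mem_coe, Set.Finite.mem_toFinset, Set.mem_setOf_eq] at hM'
    rw [Finset.mem_coe, Finset.mem_filter, Set.Finite.mem_toFinset, Set.mem_setOf_eq]
    constructor
    · rw [hmul]
      push_cast
      rw [mul_comm]
      exact (le_div_iff₀ hDpos).mp hM'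
    · exact le_add_right le_rfl
  · intro M hM
    rw [Finset.mem_coe, Finset.mem_filter, Set.Finite.mem_toFinset, Set.mem_setOf_eq] at hM
    exact add_tsub_cancel_of_le hM.2
  · intro M' _
    exact add_tsub_cancel_left D M'

lemma swap_sum (T : Finset (X →₀ ℕ)) (K : X →₀ ℕ) (f : (X →₀ ℕ) → ℤ) :
    ∑ M ∈ T, ∑ D ∈ Finset.Iic (M ⊓ K), f D
      = ∑ D ∈ Finset.Iic K, ((T.filter (fun M => D ≤ M)).card : ℤ) * f D := by
  calc ∑ M ∈ T, ∑ D ∈ Finset.Iic (M ⊓ K), f D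
      = ∑ M ∈ T, ∑ D ∈ Finset.Iic K, if D ≤ M then f D else 0 := by
        refine Finset.sum_congr rfl fun M _ => ?_
        have h1 : Finset.Iic (M ⊓ K) = (Finset.Iic K).filter (fun D => D ≤ M) := by
          ext D; simp [Finset.mem_Iic, le_inf_iff, and_comm]
        rw [h1, Finset.sum_filter]
    _ = ∑ D ∈ Finset.Iic K, ∑ M ∈ T, if D ≤ M then f D else 0 := Finset.sum_comm
    _ = ∑ D ∈ Finset.Iic K, ((T.filter (fun M => D ≤ M)).card : ℤ) * f D := by
        refine Finset.sum_congr rfl fun D _ => ?_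
        rw [← Finset.sum_filter, Finset.sum_const, nsmul_eq_mul]

lemma swap_sum2 (T : Finset (X →₀ ℕ)) (hT : ∀ K ∈ T, ∀ D ≤ K, D ∈ T) (g : (X →₀ ℕ) → ℝ) :
    ∑ K ∈ T, ∑ D ∈ Finset.Iic K, g D
      = ∑ D ∈ T, ((T.filter (fun K => D ≤ K)).card : ℝ) * g D := by
  calc ∑ K ∈ T, ∑ D ∈ Finset.Iic K, g D
      = ∑ K ∈ T, ∑ D ∈ T, if D ≤ K then g D else 0 := by
        refine Finset.sum_congr rfl fun K hK => ?_
        have h1 : T.filter (fun D => D ≤ K) = Finset.Iic K := by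
          ext D
          simp only [Finset.mem_filter, Finset.mem_Iic]
          exact ⟨fun h => h.2, fun h => ⟨hT K hK D h, h⟩⟩
        rw [← h1, Finset.sum_filter]
    _ = ∑ D ∈ T, ∑ K ∈ T, if D ≤ K then g D else 0 := Finset.sum_comm
    _ = ∑ D ∈ T, ((T.filter (fun K => D ≤ K)).card : ℝ) * g D := by
        refine Finset.sum_congr rfl fun D _ => ?_
        rw [← Finset.sum_filter, Finset.sum_const, nsmul_eq_mul]

lemma nrm_mono (hge : ∀ A, 1 ≤ Nrm A) (hmul : ∀ A B, Nrm (A + B) = Nrm A * Nrm B)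
    {D K : X →₀ ℕ} (h : D ≤ K) : Nrm D ≤ Nrm K := by
  have : K = D + (K - D) := (add_tsub_cancel_of_le h).symm
  rw [this, hmul]
  exact le_mul_of_one_le_right (le_trans zero_le_one (hge D)) (hge _)

end

lemma dyadic_bound {X : Type*} [DecidableEq X] (Nrm : (X →₀ ℕ) → ℤ)
    (hge : ∀ A, 1 ≤ Nrm A)
    (hfin : ∀ x : ℝ, {A : X →₀ ℕ | (Nrm A : ℝ) ≤ x}.Finite)
    (α : ℝ) (hα0 : 0 ≤ α) (hα1 : α < 1)
    (C₁ : ℝ) (hC₁ : 0 < C₁)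
    (hcnt : ∀ t : ℝ, 1 ≤ t → ((hfin t).toFinset.card : ℝ) ≤ C₁ * t)
    (y : ℝ) (hy : 1 ≤ y) :
    ∑ D ∈ (hfin y).toFinset, ((Nrm D : ℝ)) ^ (-α)
      ≤ (2 * C₁ * (2:ℝ) ^ (1-α) / ((2:ℝ) ^ (1-α) - 1)) * y ^ (1-α) := by
  set r : ℝ := (2:ℝ) ^ (1-α) with hr
  have hr1 : 1 < r := by
    rw [hr, Real.one_lt_rpow_iff_of_pos (by norm_num)]
    exact Or.inl ⟨by norm_num, by linarith⟩
  have hrpos : 0 < r - 1 := by linarith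
  set J := Nat.log 2 ⌊y⌋₊ with hJ
  have hyflr : (1:ℕ) ≤ ⌊y⌋₊ := Nat.le_floor (by exact_mod_cast hy)
  -- each D in the ball has toNat norm between 1 and ⌊y⌋₊
  have hnD : ∀ D ∈ (hfin y).toFinset, 1 ≤ (Nrm D).toNat ∧ (Nrm D).toNat ≤ ⌊y⌋₊ := by
    intro D hD
    rw [Set.Finite.mem_toFinset, Set.mem_setOf_eq] at hD
    have h1 : (1:ℤ) ≤ Nrm D := hge D
    have hnn : (0:ℤ) ≤ Nrm D := le_trans zero_le_one h1
    constructor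
    · have : (1:ℤ).toNat ≤ (Nrm D).toNat := Int.toNat_le_toNat h1
      simpa using this
    · apply Nat.le_floor
      have h2 : (((Nrm D).toNat : ℤ) : ℝ) ≤ y := by rw [Int.toNat_of_nonneg hnn]; exact hD
      exact_mod_cast h2
  have hmaps : ∀ D ∈ (hfin y).toFinset,
      Nat.log 2 (Nrm D).toNat ∈ Finset.range (J + 1) := by
    intro D hD
    rw [Finset.mem_range, Nat.lt_succ_iff, hJ]
    exact Nat.log_mono_right (hnD D hD).2
  rw [← Finset.sum_fiberwise_of_maps_to hmaps (fun D => ((Nrm D : ℝ)) ^ (-α))]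
  have fiber_bound : ∀ j ∈ Finset.range (J + 1),
      ∑ D ∈ (hfin y).toFinset with Nat.log 2 (Nrm D).toNat = j,
        ((Nrm D : ℝ)) ^ (-α) ≤ 2 * C₁ * r ^ j := by
    intro j _
    have h2jpos : (0:ℝ) < (2:ℝ) ^ j := by positivity
    have step1 : ∀ D ∈ (hfin y).toFinset.filter
        (fun D => Nat.log 2 (Nrm D).toNat = j),
        ((Nrm D : ℝ)) ^ (-α) ≤ ((2:ℝ) ^ j) ^ (-α) := by
      intro D hD
      rw [Finset.mem_filter] at hD
      have h1 := (hnD D hD.1).1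
      have hle : (2:ℕ) ^ j ≤ (Nrm D).toNat := by
        rw [← hD.2]; exact Nat.pow_log_le_self 2 (by omega)
      have hnn : (0:ℤ) ≤ Nrm D := le_trans zero_le_one (hge D)
      have hleR : ((2:ℝ)) ^ j ≤ ((Nrm D : ℝ)) := by
        have h3 : ((2:ℝ)) ^ j ≤ (((Nrm D).toNat : ℤ) : ℝ) := by exact_mod_cast hle
        rwa [Int.toNat_of_nonneg hnn] at h3
      exact Real.rpow_le_rpow_of_nonpos h2jpos hleR (by linarith)
    have card_bound : (((hfin y).toFinset.filter
        (fun D => Nat.log 2 (Nrm D).toNat = j)).card : ℝ) ≤ C₁ * 2 ^ (j + 1) := by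
      have hsub : (hfin y).toFinset.filter (fun D => Nat.log 2 (Nrm D).toNat = j)
          ⊆ (hfin ((2:ℝ) ^ (j + 1))).toFinset := by
        intro D hD
        rw [Finset.mem_filter] at hD
        have h1 := (hnD D hD.1).1
        have hlt : (Nrm D).toNat < 2 ^ (j + 1) := by
          rw [← hD.2]; exact Nat.lt_pow_succ_log_self (by norm_num) _
        rw [Set.Finite.mem_toFinset, Set.mem_setOf_eq]
        have hnn : (0:ℤ) ≤ Nrm D := le_trans zero_le_one (hge D)
        have h3 : (((Nrm D).toNat : ℤ) : ℝ) ≤ (2:ℝ) ^ (j+1) := by exact_mod_cast hlt.le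
        rwa [Int.toNat_of_nonneg hnn] at h3
      calc (((hfin y).toFinset.filter (fun D => Nat.log 2 (Nrm D).toNat = j)).card : ℝ)
          ≤ ((hfin ((2:ℝ) ^ (j+1))).toFinset.card : ℝ) := by
            exact_mod_cast Finset.card_le_card hsub
        _ ≤ C₁ * 2 ^ (j+1) := hcnt _ (one_le_pow₀ (by norm_num))
    calc ∑ D ∈ (hfin y).toFinset with Nat.log 2 (Nrm D).toNat = j, ((Nrm D : ℝ)) ^ (-α)
        ≤ ∑ D ∈ (hfin y).toFinset with Nat.log 2 (Nrm D).toNat = j, ((2:ℝ) ^ j) ^ (-α) :=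
          Finset.sum_le_sum step1
      _ = (((hfin y).toFinset.filter (fun D => Nat.log 2 (Nrm D).toNat = j)).card : ℝ)
            * ((2:ℝ) ^ j) ^ (-α) := by rw [Finset.sum_const, nsmul_eq_mul]
      _ ≤ C₁ * 2 ^ (j+1) * ((2:ℝ) ^ j) ^ (-α) := by
          apply mul_le_mul_of_nonneg_right card_bound (Real.rpow_nonneg h2jpos.le _)
      _ = 2 * C₁ * r ^ j := by
          have hbj : ((2:ℝ) ^ j) * ((2:ℝ) ^ j) ^ (-α) = ((2:ℝ) ^ j) ^ (1 - α) := by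
            rw [sub_eq_add_neg, Real.rpow_add h2jpos, Real.rpow_one]
          have hrj : ((2:ℝ) ^ j) ^ (1 - α) = r ^ j := by
            rw [← Real.rpow_natCast (2:ℝ) j, ← Real.rpow_mul (by norm_num), mul_comm,
              Real.rpow_mul (by norm_num), Real.rpow_natCast]
          rw [pow_succ]
          calc C₁ * ((2:ℝ) ^ j * 2) * ((2:ℝ) ^ j) ^ (-α)
              = 2 * C₁ * (((2:ℝ) ^ j) * ((2:ℝ) ^ j) ^ (-α)) := by ring
            _ = 2 * C₁ * r ^ j := by rw [hbj, hrj]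
  calc ∑ j ∈ Finset.range (J + 1), ∑ D ∈ (hfin y).toFinset with
        Nat.log 2 (Nrm D).toNat = j, ((Nrm D : ℝ)) ^ (-α)
      ≤ ∑ j ∈ Finset.range (J + 1), 2 * C₁ * r ^ j := Finset.sum_le_sum fiber_bound
    _ = 2 * C₁ * ((r ^ (J+1) - 1) / (r - 1)) := by
        rw [← Finset.mul_sum, geom_sum_eq (ne_of_gt hr1)]
    _ ≤ 2 * C₁ * ((r * (r ^ J)) / (r - 1)) := by
        have h1 : r ^ (J+1) - 1 ≤ r * r ^ J := by
          rw [pow_succ]; nlinarith [pow_pos (lt_trans one_pos hr1) J]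
        gcongr
    _ ≤ (2 * C₁ * r / (r - 1)) * y ^ (1-α) := by
        have hrJ : r ^ J ≤ y ^ (1-α) := by
          have h2J : ((2:ℝ) ^ J) ≤ y := by
            have := Nat.pow_log_le_self 2 (x := ⌊y⌋₊) (by omega)
            have hc := Nat.cast_le (α := ℝ) |>.mpr this
            push_cast at hc
            exact hc.trans (Nat.floor_le (by linarith))
          have : ((2:ℝ) ^ J) ^ (1-α) ≤ y ^ (1-α) :=
            Real.rpow_le_rpow (by positivity) h2J (by linarith)
          calc r ^ J = ((2:ℝ) ^ J) ^ (1-α) := by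
                rw [← Real.rpow_natCast (2:ℝ) J, ← Real.rpow_mul (by norm_num), mul_comm,
                  Real.rpow_mul (by norm_num), Real.rpow_natCast]
            _ ≤ y ^ (1-α) := this
        calc 2 * C₁ * (r * r ^ J / (r - 1)) = (2 * C₁ * r / (r - 1)) * r ^ J := by ring
          _ ≤ (2 * C₁ * r / (r - 1)) * y ^ (1-α) := by
              apply mul_le_mul_of_nonneg_left hrJ
              positivity

/-- Let `S(x, y) = ∑_{N(M) ≤ x, N(K) ≤ y} C_K(M)`. Then
`S(x, y) = c·x + O(x^α · y^{2−α})` uniformly for `x, y ≥ 1`. -/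
theorem double_sum_ram_uniform {X : Type*} [Nonempty X] [Countable X] [DecidableEq X]
    (Nrm : (X →₀ ℕ) → ℤ)
    (hge : ∀ A, 1 ≤ Nrm A) (h0 : Nrm 0 = 1) (hgt : ∀ A, A ≠ 0 → 1 < Nrm A)
    (hmul : ∀ A B, Nrm (A + B) = Nrm A * Nrm B)
    (c α : ℝ) (hc : 0 < c) (hα0 : 0 ≤ α) (hα1 : α < 1)
    (hfin : ∀ x : ℝ, {A : X →₀ ℕ | (Nrm A : ℝ) ≤ x}.Finite)
    (hcount : (fun x : ℝ => (((hfin x).toFinset.card : ℝ) - c * x))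
      =O[atTop] fun x : ℝ => x ^ α) :
    ∃ C : ℝ, 0 < C ∧ ∀ x y : ℝ, 1 ≤ x → 1 ≤ y →
      |((∑ K ∈ (hfin y).toFinset, ∑ M ∈ (hfin x).toFinset, ram Nrm K M : ℤ) : ℝ)
          - c * x|
        ≤ C * x ^ α * y ^ (2 - α) := by
  -- positivity facts for norms
  have hNpos : ∀ D : X →₀ ℕ, (0:ℝ) < (Nrm D : ℝ) := fun D => by
    exact_mod_cast lt_of_lt_of_le zero_lt_one (hge D)
  -- Step 0 : the remainder bound for the counting function
  obtain ⟨C₀, hC₀pos, hC₀c, hR⟩ : ∃ C₀ : ℝ, 0 < C₀ ∧ c ≤ C₀ ∧ ∀ t : ℝ, 0 < t →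
      |((hfin t).toFinset.card : ℝ) - c * t| ≤ C₀ * t ^ α := by
    rw [isBigO_iff] at hcount
    obtain ⟨C', hC'⟩ := hcount
    rw [eventually_atTop] at hC'
    obtain ⟨x₀', hx₀'⟩ := hC'
    set x₀ : ℝ := max x₀' 1 with hx₀def
    have hx₀1 : (1:ℝ) ≤ x₀ := le_max_right _ _
    set B : ℝ := ((hfin x₀).toFinset.card : ℝ) + c * x₀ with hBdef
    have hB0 : 0 ≤ B := by positivity
    set C₀ : ℝ := max (max |C'| c) B + 1 with hC₀def
    have hcC₀ : c ≤ C₀ := le_trans (le_trans (le_max_right _ _) (le_max_left _ _)) (by linarith)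
    have hC'C₀ : |C'| ≤ C₀ := le_trans (le_trans (le_max_left _ _) (le_max_left _ _)) (by linarith)
    have hBC₀ : B ≤ C₀ := by have := le_max_right (max |C'| c) B; linarith
    refine ⟨C₀, by linarith, hcC₀, ?_⟩
    intro t ht
    rcases le_or_gt x₀ t with h | h
    · -- large t : use the big-O bound
      have hb := hx₀' t (le_trans (le_max_left _ _) h)
      rw [Real.norm_eq_abs, Real.norm_eq_abs, abs_of_nonneg (Real.rpow_nonneg ht.le α)] at hb
      calc |((hfin t).toFinset.card : ℝ) - c * t| ≤ C' * t ^ α := hb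
        _ ≤ C₀ * t ^ α := by
            apply mul_le_mul_of_nonneg_right _ (Real.rpow_nonneg ht.le α)
            exact le_trans (le_abs_self C') hC'C₀
    · rcases le_or_gt 1 t with h1 | h1
      · -- medium t : use monotonicity
        have hmono : ((hfin t).toFinset.card : ℝ) ≤ ((hfin x₀).toFinset.card : ℝ) := by
          have : (hfin t).toFinset ⊆ (hfin x₀).toFinset := by
            intro A hA
            rw [Set.Finite.mem_toFinset, Set.mem_setOf_eq] at *
            linarith
          exact_mod_cast Finset.card_le_card this
        have hct : c * t ≤ c * x₀ := mul_le_mul_of_nonneg_left h.le hc.le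
        have hcard0 : (0:ℝ) ≤ ((hfin t).toFinset.card : ℝ) := Nat.cast_nonneg _
        have hcard0' : (0:ℝ) ≤ ((hfin x₀).toFinset.card : ℝ) := Nat.cast_nonneg _
        have hct0 : (0:ℝ) ≤ c * t := by positivity
        have habs : |((hfin t).toFinset.card : ℝ) - c * t| ≤ B := by
          rw [abs_le, hBdef]
          constructor <;> [linarith; linarith]
        have htα : (1:ℝ) ≤ t ^ α := Real.one_le_rpow h1 hα0
        calc |((hfin t).toFinset.card : ℝ) - c * t| ≤ B := habs
          _ ≤ C₀ * 1 := by linarith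
          _ ≤ C₀ * t ^ α := by
              apply mul_le_mul_of_nonneg_left htα (by linarith)
      · -- small t : the ball is empty
        have hempty : (hfin t).toFinset = ∅ := by
          ext A
          rw [Set.Finite.mem_toFinset, Set.mem_setOf_eq]
          simp only [Finset.notMem_empty, iff_false, not_le]
          exact lt_of_lt_of_le h1 (by exact_mod_cast hge A)
        have htα : t ≤ t ^ α := by
          calc t = t ^ (1:ℝ) := (Real.rpow_one t).symm
            _ ≤ t ^ α := Real.rpow_le_rpow_of_exponent_ge ht h1.le hα1.le
        rw [hempty]
        simp only [Finset.card_empty, Nat.cast_zero, zero_sub, abs_neg]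
        rw [abs_of_nonneg (by positivity)]
        calc c * t ≤ C₀ * t := mul_le_mul_of_nonneg_right hcC₀ ht.le
          _ ≤ C₀ * t ^ α := mul_le_mul_of_nonneg_left htα (by linarith)
  -- the crude linear upper bound for the counting function
  set C₁ : ℝ := C₀ + c with hC₁def
  have hC₁pos : 0 < C₁ := by linarith
  have hcnt : ∀ t : ℝ, 1 ≤ t → ((hfin t).toFinset.card : ℝ) ≤ C₁ * t := by
    intro t ht
    have htpos : 0 < t := lt_of_lt_of_le one_pos ht
    have h1 := hR t htpos
    have h2 : t ^ α ≤ t := by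
      calc t ^ α ≤ t ^ (1:ℝ) := Real.rpow_le_rpow_of_exponent_le ht hα1.le
        _ = t := Real.rpow_one t
    have h3 : ((hfin t).toFinset.card : ℝ) - c * t ≤ C₀ * t ^ α := le_trans (le_abs_self _) h1
    have h7 : C₀ * t ^ α ≤ C₀ * t := mul_le_mul_of_nonneg_left h2 (le_of_lt hC₀pos)
    have : C₁ * t = C₀ * t + c * t := by rw [hC₁def]; ring
    linarith
  -- the geometric-series constant
  set r : ℝ := (2:ℝ) ^ (1-α) with hrdef
  have hr1 : 1 < r := by
    rw [hrdef, Real.one_lt_rpow_iff_of_pos (by norm_num)]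
    exact Or.inl ⟨by norm_num, by linarith⟩
  set C₂ : ℝ := 2 * C₁ * r / (r - 1) with hC₂def
  have hrpos0 : (0:ℝ) < r := lt_trans one_pos hr1
  have hC₂pos : 0 < C₂ := by
    apply div_pos (mul_pos (mul_pos two_pos hC₁pos) hrpos0) (by linarith)
  refine ⟨C₀ * C₁ * C₂, by positivity, ?_⟩
  intro x y hx hy
  have hxpos : (0:ℝ) < x := lt_of_lt_of_le one_pos hx
  have hypos : (0:ℝ) < y := lt_of_lt_of_le one_pos hy
  -- Step 1 : inner sum over M
  have hstep1 : ∀ K : X →₀ ℕ, ∑ M ∈ (hfin x).toFinset, ram Nrm K M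
      = ∑ D ∈ Finset.Iic K,
          (((hfin (x / (Nrm D : ℝ))).toFinset.card : ℤ) * (Nrm D * mob (K - D))) := by
    intro K
    unfold ram
    rw [swap_sum]
    refine Finset.sum_congr rfl fun D _ => ?_
    rw [card_shift Nrm hge hmul hfin x D]
  -- Step 2 : cast to ℝ
  have h2 : ((∑ K ∈ (hfin y).toFinset, ∑ M ∈ (hfin x).toFinset, ram Nrm K M : ℤ) : ℝ)
      = ∑ K ∈ (hfin y).toFinset, ∑ D ∈ Finset.Iic K,
          ((hfin (x / (Nrm D : ℝ))).toFinset.card : ℝ)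
            * ((Nrm D : ℝ) * (mob (K - D) : ℝ)) := by
    rw [Finset.sum_congr rfl (fun K _ => hstep1 K)]
    push_cast
    rfl
  -- Step 3 : split into main term and error term
  have h3 : ∀ K ∈ (hfin y).toFinset,
      ∑ D ∈ Finset.Iic K, ((hfin (x / (Nrm D : ℝ))).toFinset.card : ℝ)
          * ((Nrm D : ℝ) * (mob (K - D) : ℝ))
      = (c * x) * (∑ D ∈ Finset.Iic K, (mob (K - D) : ℝ))
        + ∑ D ∈ Finset.Iic K,
            (((hfin (x / (Nrm D : ℝ))).toFinset.card : ℝ) - c * (x / (Nrm D : ℝ)))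
              * ((Nrm D : ℝ) * (mob (K - D) : ℝ)) := by
    intro K _
    rw [Finset.mul_sum, ← Finset.sum_add_distrib]
    refine Finset.sum_congr rfl fun D _ => ?_
    have hn := hNpos D
    field_simp
    ring
  -- the Möbius main term
  have hmob : ∀ K : X →₀ ℕ, (∑ D ∈ Finset.Iic K, (mob (K - D) : ℝ))
      = if K = 0 then (1:ℝ) else 0 := by
    intro K
    have := sum_Iic_mob_sub K
    have hcast : (∑ D ∈ Finset.Iic K, (mob (K - D) : ℝ))
        = ((∑ D ∈ Finset.Iic K, mob (K - D) : ℤ) : ℝ) := by push_cast; rfl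
    rw [hcast, this]
    split <;> simp
  have h0mem : (0 : X →₀ ℕ) ∈ (hfin y).toFinset := by
    rw [Set.Finite.mem_toFinset, Set.mem_setOf_eq, h0]
    exact_mod_cast hy
  have hmain : ∑ K ∈ (hfin y).toFinset, (if K = 0 then (1:ℝ) else 0) = 1 := by
    rw [Finset.sum_ite_eq' ((hfin y).toFinset) 0 (fun _ => (1:ℝ))]
    rw [if_pos h0mem]
  -- combine
  have h4 : ((∑ K ∈ (hfin y).toFinset, ∑ M ∈ (hfin x).toFinset, ram Nrm K M : ℤ) : ℝ)
      - c * x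
      = ∑ K ∈ (hfin y).toFinset, ∑ D ∈ Finset.Iic K,
          (((hfin (x / (Nrm D : ℝ))).toFinset.card : ℝ) - c * (x / (Nrm D : ℝ)))
            * ((Nrm D : ℝ) * (mob (K - D) : ℝ)) := by
    rw [h2, Finset.sum_congr rfl h3, Finset.sum_add_distrib]
    have : ∑ K ∈ (hfin y).toFinset, (c * x) * (∑ D ∈ Finset.Iic K, (mob (K - D) : ℝ))
        = c * x := by
      rw [← Finset.mul_sum, Finset.sum_congr rfl (fun K _ => hmob K), hmain, mul_one]
    rw [this]; ring
  rw [h4]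
  -- Step 4 : bound the error term
  have hbound : ∀ K ∈ (hfin y).toFinset, ∀ D ∈ Finset.Iic K,
      |(((hfin (x / (Nrm D : ℝ))).toFinset.card : ℝ) - c * (x / (Nrm D : ℝ)))
          * ((Nrm D : ℝ) * (mob (K - D) : ℝ))|
        ≤ C₀ * (x ^ α * ((Nrm D : ℝ)) ^ (1 - α)) := by
    intro K _ D _
    have hn := hNpos D
    have hdivpos : 0 < x / (Nrm D : ℝ) := div_pos hxpos hn
    have h5 := hR _ hdivpos
    have hmb : |(mob (K - D) : ℝ)| ≤ 1 := by
      have := mob_abs_le (K - D)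
      exact_mod_cast this
    have hkey : (x / (Nrm D : ℝ)) ^ α * (Nrm D : ℝ) = x ^ α * ((Nrm D : ℝ)) ^ (1 - α) := by
      rw [Real.div_rpow hxpos.le hn.le, sub_eq_add_neg, Real.rpow_add hn, Real.rpow_one,
        Real.rpow_neg hn.le]
      have : ((Nrm D : ℝ)) ^ α ≠ 0 := ne_of_gt (Real.rpow_pos_of_pos hn α)
      field_simp
    calc |(((hfin (x / (Nrm D : ℝ))).toFinset.card : ℝ) - c * (x / (Nrm D : ℝ)))
            * ((Nrm D : ℝ) * (mob (K - D) : ℝ))|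
        = |((hfin (x / (Nrm D : ℝ))).toFinset.card : ℝ) - c * (x / (Nrm D : ℝ))|
            * ((Nrm D : ℝ) * |(mob (K - D) : ℝ)|) := by
          rw [abs_mul, abs_mul, abs_of_nonneg hn.le]
      _ ≤ (C₀ * (x / (Nrm D : ℝ)) ^ α) * ((Nrm D : ℝ) * 1) := by
          apply mul_le_mul h5 _ (by positivity) (by positivity)
          exact mul_le_mul_of_nonneg_left hmb hn.le
      _ = C₀ * ((x / (Nrm D : ℝ)) ^ α * (Nrm D : ℝ)) := by ring
      _ = C₀ * (x ^ α * ((Nrm D : ℝ)) ^ (1 - α)) := by rw [hkey]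
  have herr1 : |∑ K ∈ (hfin y).toFinset, ∑ D ∈ Finset.Iic K,
      (((hfin (x / (Nrm D : ℝ))).toFinset.card : ℝ) - c * (x / (Nrm D : ℝ)))
        * ((Nrm D : ℝ) * (mob (K - D) : ℝ))|
      ≤ C₀ * x ^ α * ∑ K ∈ (hfin y).toFinset, ∑ D ∈ Finset.Iic K,
          ((Nrm D : ℝ)) ^ (1 - α) := by
    calc |∑ K ∈ (hfin y).toFinset, ∑ D ∈ Finset.Iic K, _|
        ≤ ∑ K ∈ (hfin y).toFinset, |∑ D ∈ Finset.Iic K,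
            (((hfin (x / (Nrm D : ℝ))).toFinset.card : ℝ) - c * (x / (Nrm D : ℝ)))
              * ((Nrm D : ℝ) * (mob (K - D) : ℝ))| := Finset.abs_sum_le_sum_abs _ _
      _ ≤ ∑ K ∈ (hfin y).toFinset, ∑ D ∈ Finset.Iic K,
            |(((hfin (x / (Nrm D : ℝ))).toFinset.card : ℝ) - c * (x / (Nrm D : ℝ)))
              * ((Nrm D : ℝ) * (mob (K - D) : ℝ))| :=
          Finset.sum_le_sum (fun K _ => Finset.abs_sum_le_sum_abs _ _)
      _ ≤ ∑ K ∈ (hfin y).toFinset, ∑ D ∈ Finset.Iic K,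
            C₀ * (x ^ α * ((Nrm D : ℝ)) ^ (1 - α)) :=
          Finset.sum_le_sum (fun K hK => Finset.sum_le_sum (hbound K hK))
      _ = C₀ * x ^ α * ∑ K ∈ (hfin y).toFinset, ∑ D ∈ Finset.Iic K,
            ((Nrm D : ℝ)) ^ (1 - α) := by
          rw [Finset.mul_sum]
          refine Finset.sum_congr rfl fun K _ => ?_
          rw [Finset.mul_sum]
          exact Finset.sum_congr rfl fun D _ => by ring
  -- Step 5 : rearrange the double sum of norms
  have hdc : ∀ K ∈ (hfin y).toFinset, ∀ D ≤ K, D ∈ (hfin y).toFinset := by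
    intro K hK D hD
    rw [Set.Finite.mem_toFinset, Set.mem_setOf_eq] at *
    have := nrm_mono Nrm hge hmul hD
    calc ((Nrm D : ℤ) : ℝ) ≤ ((Nrm K : ℤ) : ℝ) := by exact_mod_cast this
      _ ≤ y := hK
  have hswap2 : ∑ K ∈ (hfin y).toFinset, ∑ D ∈ Finset.Iic K, ((Nrm D : ℝ)) ^ (1 - α)
      = ∑ D ∈ (hfin y).toFinset,
          (((hfin (y / (Nrm D : ℝ))).toFinset.card : ℝ)) * ((Nrm D : ℝ)) ^ (1 - α) := by
    rw [swap_sum2 ((hfin y).toFinset) hdc (fun D => ((Nrm D : ℝ)) ^ (1 - α))]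
    refine Finset.sum_congr rfl fun D _ => ?_
    rw [card_shift Nrm hge hmul hfin y D]
  -- Step 6 : bound each term and use the dyadic lemma
  have hterm : ∀ D ∈ (hfin y).toFinset,
      (((hfin (y / (Nrm D : ℝ))).toFinset.card : ℝ)) * ((Nrm D : ℝ)) ^ (1 - α)
        ≤ C₁ * y * ((Nrm D : ℝ)) ^ (-α) := by
    intro D hD
    rw [Set.Finite.mem_toFinset, Set.mem_setOf_eq] at hD
    have hn := hNpos D
    have hdiv1 : (1:ℝ) ≤ y / (Nrm D : ℝ) := (one_le_div hn).mpr hD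
    have h6 := hcnt _ hdiv1
    have hkey : (y / (Nrm D : ℝ)) * ((Nrm D : ℝ)) ^ (1 - α) = y * ((Nrm D : ℝ)) ^ (-α) := by
      rw [sub_eq_add_neg, Real.rpow_add hn, Real.rpow_one]
      field_simp
    calc (((hfin (y / (Nrm D : ℝ))).toFinset.card : ℝ)) * ((Nrm D : ℝ)) ^ (1 - α)
        ≤ (C₁ * (y / (Nrm D : ℝ))) * ((Nrm D : ℝ)) ^ (1 - α) := by
          apply mul_le_mul_of_nonneg_right h6 (Real.rpow_nonneg hn.le _)
      _ = C₁ * ((y / (Nrm D : ℝ)) * ((Nrm D : ℝ)) ^ (1 - α)) := by ring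
      _ = C₁ * (y * ((Nrm D : ℝ)) ^ (-α)) := by rw [hkey]
      _ = C₁ * y * ((Nrm D : ℝ)) ^ (-α) := by ring
  have hdyad := dyadic_bound Nrm hge hfin α hα0 hα1 C₁ hC₁pos hcnt y hy
  have hfinal : ∑ K ∈ (hfin y).toFinset, ∑ D ∈ Finset.Iic K, ((Nrm D : ℝ)) ^ (1 - α)
      ≤ C₁ * C₂ * y ^ (2 - α) := by
    rw [hswap2]
    calc ∑ D ∈ (hfin y).toFinset,
          (((hfin (y / (Nrm D : ℝ))).toFinset.card : ℝ)) * ((Nrm D : ℝ)) ^ (1 - α)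
        ≤ ∑ D ∈ (hfin y).toFinset, C₁ * y * ((Nrm D : ℝ)) ^ (-α) :=
          Finset.sum_le_sum hterm
      _ = C₁ * y * ∑ D ∈ (hfin y).toFinset, ((Nrm D : ℝ)) ^ (-α) := by
          rw [Finset.mul_sum]
      _ ≤ C₁ * y * (C₂ * y ^ (1 - α)) := by
          apply mul_le_mul_of_nonneg_left _ (by positivity)
          rw [hC₂def]; exact hdyad
      _ = C₁ * C₂ * (y * y ^ (1 - α)) := by ring
      _ = C₁ * C₂ * y ^ (2 - α) := by
          congr 1
          rw [show (2:ℝ) - α = 1 + (1 - α) by ring, Real.rpow_add hypos, Real.rpow_one]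
  calc |∑ K ∈ (hfin y).toFinset, ∑ D ∈ Finset.Iic K,
        (((hfin (x / (Nrm D : ℝ))).toFinset.card : ℝ) - c * (x / (Nrm D : ℝ)))
          * ((Nrm D : ℝ) * (mob (K - D) : ℝ))|
      ≤ C₀ * x ^ α * ∑ K ∈ (hfin y).toFinset, ∑ D ∈ Finset.Iic K,
          ((Nrm D : ℝ)) ^ (1 - α) := herr1
    _ ≤ C₀ * x ^ α * (C₁ * C₂ * y ^ (2 - α)) := by
        apply mul_le_mul_of_nonneg_left hfinal (by positivity)
    _ = C₀ * C₁ * C₂ * x ^ α * y ^ (2 - α) := by ring
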